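/- For every k ≥ 0 and r ≥ 2, the limits lim_{d→∞} P(X_{d,r} = k) and lim_{d→∞} P(Y_{d,r} = k) exist, and the limiting values define probability distributions of random variables X_{∞,r} and Y_{∞,r} (i.e., the limiting probabilities sum to 1 over k). -/

import Mathlib

open scoped ENNReal

/-- Law of `(j+1)·B(j+1)` : takes value `j+1` with probability `1/(j+1)` and `0` otherwise. -/
noncomputable def Bstep (j : ℕ) : PMF ℕ :=
  (PMF.bernoulli ((j + 1 : NNReal))⁻¹
      (inv_le_one_of_one_le₀ (by exact_mod_cast Nat.one_le_iff_ne_zero.mpr (Nat.succ_ne_zero j)))).map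
    (fun b => if b then j + 1 else 0)

/-- Law of the sum of `r` i.i.d. copies of a random variable with law `p`
(the `r`-fold convolution). -/
noncomputable def conv : ℕ → PMF ℕ → PMF ℕ
  | 0, _ => PMF.pure 0
  | r + 1, p => (conv r p).bind fun a => p.map fun b => a + b

/-- The sequence `X_{d,r}`: `X_{0,r} = 1` and
`X_{d,r} = (X_{d-1,r}^{(r)} + 1)·B(X_{d-1,r}^{(r)} + 1)`. -/
noncomputable def Xd : ℕ → ℕ → PMF ℕ
  | 0, _ => PMF.pure 1
  | d + 1, r => (conv r (Xd d r)).bind Bstep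

/-- The sequence `Y_{d,r}`: `Y_{0,r} = 0` and
`Y_{d,r} = ((Y_{d-1,r} + 1)·B(Y_{d-1,r} + 1))^{(r)}`. -/
noncomputable def Yd : ℕ → ℕ → PMF ℕ
  | 0, _ => PMF.pure 0
  | d + 1, r => conv r ((Yd d r).bind Bstep)


open Filter

namespace LXY

lemma Bstep_apply (j k : ℕ) :
    Bstep j k = if k = j + 1 then ((j : ℝ≥0∞) + 1)⁻¹
      else if k = 0 then 1 - ((j : ℝ≥0∞) + 1)⁻¹ else 0 := by
  rw [Bstep, PMF.map_apply, tsum_bool]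
  simp only [PMF.bernoulli_apply, cond_false, cond_true, Bool.false_eq_true, if_false, if_true]
  rcases eq_or_ne k (j + 1) with h | h
  · subst h
    simp
  · rcases eq_or_ne k 0 with h0 | h0
    · subst h0
      simp [h]
    · simp [h, h0]

lemma Bstep_zero : Bstep 0 = PMF.pure 1 := by
  ext k
  rw [Bstep_apply, PMF.pure_apply]
  rcases eq_or_ne k 1 with h | h
  · simp [h]
  · simp [h, show k = 0 + 1 ↔ False by simpa using h]

lemma Xd_eq (d r : ℕ) : Xd d r = (Yd d r).bind Bstep := by
  induction d with
  | zero => show PMF.pure 1 = _; rw [show Yd 0 r = PMF.pure 0 from rfl, PMF.pure_bind, Bstep_zero]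
  | succ d ih =>
      show (conv r (Xd d r)).bind Bstep = (conv r ((Yd d r).bind Bstep)).bind Bstep
      rw [ih]

lemma Yd_succ (d r : ℕ) : Yd (d + 1) r = conv r (Xd d r) := by
  rw [Xd_eq]; rfl

lemma map_add_apply (p : PMF ℕ) (a k : ℕ) :
    (p.map fun b => a + b) k = if a ≤ k then p (k - a) else 0 := by
  rw [PMF.map_apply]
  split_ifs with h
  · rw [tsum_eq_single (k - a)]
    · simp [Nat.add_sub_cancel' h]
    · intro b hb
      rw [if_neg]
      omega
  · rw [ENNReal.summable.tsum_eq_zero_iff]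
    intro b
    rw [if_neg]
    omega

lemma conv_succ_apply (n : ℕ) (p : PMF ℕ) (k : ℕ) :
    conv (n + 1) p k = ∑ i ∈ Finset.range (k + 1), conv n p i * p (k - i) := by
  show ((conv n p).bind fun a => p.map fun b => a + b) k = _
  rw [PMF.bind_apply]
  rw [tsum_eq_sum (s := Finset.range (k + 1)) (by
    intro a ha
    rw [map_add_apply, if_neg (by simpa using ha), mul_zero])]
  refine Finset.sum_congr rfl fun i hi => ?_
  rw [map_add_apply, if_pos (by simpa using Nat.lt_succ_iff.mp (Finset.mem_range.mp hi))]

/-- mean in `ℝ≥0∞` -/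
noncomputable def meanE (p : PMF ℕ) : ℝ≥0∞ := ∑' (k : ℕ), (k : ℝ≥0∞) * p k

lemma meanE_pure (a : ℕ) : meanE (PMF.pure a) = a := by
  rw [meanE, tsum_eq_single a (by
    intro b hb; rw [PMF.pure_apply, if_neg hb, mul_zero])]
  simp

lemma meanE_bind (p : PMF ℕ) (f : ℕ → PMF ℕ) :
    meanE (p.bind f) = ∑' a, p a * meanE (f a) := by
  simp only [meanE, PMF.bind_apply, ← ENNReal.tsum_mul_left]
  rw [ENNReal.tsum_comm]
  refine tsum_congr fun a => tsum_congr fun k => by ring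

lemma meanE_Bstep (j : ℕ) : meanE (Bstep j) = 1 := by
  rw [meanE, tsum_eq_single (j + 1) (by
    intro b hb
    rcases eq_or_ne b 0 with h0 | h0
    · simp [h0]
    · rw [Bstep_apply, if_neg hb, if_neg h0, mul_zero])]
  rw [Bstep_apply, if_pos rfl]
  have h1 : ((j : ℝ≥0∞) + 1) ≠ 0 := fun h => one_ne_zero ((add_eq_zero.mp h).2)
  have h2 : ((j : ℝ≥0∞) + 1) ≠ ⊤ := by
    exact ENNReal.add_ne_top.mpr ⟨ENNReal.natCast_ne_top j, ENNReal.one_ne_top⟩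
  rw [show (((j + 1 : ℕ) : ℝ≥0∞)) = (j : ℝ≥0∞) + 1 by push_cast; ring]
  exact ENNReal.mul_inv_cancel h1 h2

lemma meanE_bind_Bstep (p : PMF ℕ) : meanE (p.bind Bstep) = 1 := by
  rw [meanE_bind]
  simp only [meanE_Bstep, mul_one]
  exact p.tsum_coe

lemma meanE_map_add (p : PMF ℕ) (a : ℕ) :
    meanE (p.map fun b => a + b) = a + meanE p := by
  rw [meanE]
  have h1 : ∀ k : ℕ, (k : ℝ≥0∞) * (p.map fun b => a + b) k
      = ∑' (b : ℕ), (if k = a + b then ((a + b : ℕ) : ℝ≥0∞) * p b else 0) := by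
    intro k
    rw [PMF.map_apply, ← ENNReal.tsum_mul_left]
    refine tsum_congr fun b => ?_
    split_ifs with h
    · subst h; rfl
    · simp
  rw [tsum_congr h1, ENNReal.tsum_comm]
  have h2 : ∀ b : ℕ, (∑' (k : ℕ), (if k = a + b then ((a + b : ℕ) : ℝ≥0∞) * p b else 0))
      = ((a : ℝ≥0∞) + b) * p b := by
    intro b
    rw [tsum_eq_single (a + b) (by intro c hc; rw [if_neg hc])]
    rw [if_pos rfl]
    push_cast
    ring
  rw [tsum_congr h2]
  have h3 : ∀ b : ℕ, ((a : ℝ≥0∞) + b) * p b = (a : ℝ≥0∞) * p b + (b : ℝ≥0∞) * p b := by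
    intro b; ring
  rw [tsum_congr h3]
  rw [ENNReal.tsum_add, ENNReal.tsum_mul_left, p.tsum_coe, mul_one, meanE]

lemma meanE_conv (n : ℕ) (p : PMF ℕ) : meanE (conv n p) = n * meanE p := by
  induction n with
  | zero => show meanE (PMF.pure 0) = _; rw [meanE_pure]; simp
  | succ n ih =>
      show meanE ((conv n p).bind fun a => p.map fun b => a + b) = _
      rw [meanE_bind]
      simp only [meanE_map_add]
      have h3 : ∀ a : ℕ, conv n p a * ((a : ℝ≥0∞) + meanE p)
          = (a : ℝ≥0∞) * conv n p a + conv n p a * meanE p := by intro a; ring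
      rw [tsum_congr h3]
      rw [ENNReal.tsum_add, ← meanE, ih, ENNReal.tsum_mul_right, (conv n p).tsum_coe, one_mul]
      push_cast
      ring

lemma meanE_X (d r : ℕ) : meanE (Xd d r) = 1 := by
  rw [Xd_eq]; exact meanE_bind_Bstep _

lemma meanE_Y (d r : ℕ) : meanE (Yd d r) ≤ r := by
  cases d with
  | zero => show meanE (PMF.pure 0) ≤ r; rw [meanE_pure]; simp
  | succ d =>
      show meanE (conv r ((Yd d r).bind Bstep)) ≤ r
      rw [meanE_conv, meanE_bind_Bstep, mul_one]

lemma pmf_ne_top (p : PMF ℕ) (k : ℕ) : p k ≠ ⊤ := p.apply_ne_top k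

lemma summable_toReal (p : PMF ℕ) : Summable fun k => (p k).toReal :=
  ENNReal.summable_toReal (by rw [p.tsum_coe]; exact ENNReal.one_ne_top)

lemma tsum_toReal (p : PMF ℕ) : ∑' k, (p k).toReal = 1 := by
  rw [← ENNReal.tsum_toReal_eq (pmf_ne_top p), p.tsum_coe, ENNReal.toReal_one]

lemma toReal_le_one (p : PMF ℕ) (k : ℕ) : (p k).toReal ≤ 1 := by
  have := p.coe_le_one k
  simpa using ENNReal.toReal_mono ENNReal.one_ne_top this

/-- uniform lower bound on partial sums from mean bound -/
lemma partial_sum_ge (p : PMF ℕ) (m K : ℕ) (hm : meanE p ≤ m) (hK : 0 < K) :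
    1 - (m : ℝ) / K ≤ ∑ k ∈ Finset.range K, (p k).toReal := by
  have htail : (∑' i, p (i + K)) ≤ (m : ℝ≥0∞) / K := by
    rw [ENNReal.le_div_iff_mul_le (Or.inl (by exact_mod_cast hK.ne')) (Or.inl (ENNReal.natCast_ne_top K))]
    calc (∑' i, p (i + K)) * K = ∑' i, p (i + K) * K := by rw [ENNReal.tsum_mul_right]
      _ ≤ ∑' i, ((i + K : ℕ) : ℝ≥0∞) * p (i + K) := by
          refine ENNReal.tsum_le_tsum fun i => ?_
          rw [mul_comm]
          exact mul_le_mul_left (by exact_mod_cast Nat.le_add_left K i) _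
      _ ≤ meanE p :=
          ENNReal.tsum_comp_le_tsum_of_injective
            (show Function.Injective (fun i : ℕ => i + K) from fun i j h => by simpa using h)
            (fun n : ℕ => (n : ℝ≥0∞) * p n)
      _ ≤ m := hm
  have htail' : (∑' i, (p (i + K)).toReal) ≤ (m : ℝ) / K := by
    calc (∑' i, (p (i + K)).toReal) = (∑' i, p (i + K)).toReal := by
          rw [ENNReal.tsum_toReal_eq (fun i => pmf_ne_top p _)]
      _ ≤ ((m : ℝ≥0∞) / (K : ℝ≥0∞)).toReal := by
          refine ENNReal.toReal_mono ?_ htail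
          exact (ENNReal.div_lt_top (ENNReal.natCast_ne_top m) (by exact_mod_cast hK.ne')).ne
      _ = (m : ℝ) / K := by
          rw [ENNReal.toReal_div]
          simp
  have hsplit := (summable_toReal p).sum_add_tsum_nat_add K
  rw [tsum_toReal p] at hsplit
  linarith
noncomputable def gf (p : PMF ℕ) (z : ℂ) : ℂ := ∑' (k : ℕ), ((p k).toReal : ℂ) * z ^ k

lemma norm_coef (p : PMF ℕ) (k : ℕ) (z : ℂ) :
    ‖((p k).toReal : ℂ) * z ^ k‖ = (p k).toReal * ‖z‖ ^ k := by
  rw [norm_mul, norm_pow, Complex.norm_real, Real.norm_eq_abs,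
    abs_of_nonneg ENNReal.toReal_nonneg]

lemma summable_norm_gf (p : PMF ℕ) {z : ℂ} (hz : ‖z‖ ≤ 1) :
    Summable fun k => ‖((p k).toReal : ℂ) * z ^ k‖ := by
  refine Summable.of_nonneg_of_le (fun k => norm_nonneg _) (fun k => ?_) (summable_toReal p)
  rw [norm_coef]
  calc (p k).toReal * ‖z‖ ^ k ≤ (p k).toReal * 1 := by
        have := pow_le_one₀ (norm_nonneg z) hz (n := k)
        exact mul_le_mul_of_nonneg_left this ENNReal.toReal_nonneg
    _ = (p k).toReal := mul_one _

lemma summable_gf (p : PMF ℕ) {z : ℂ} (hz : ‖z‖ ≤ 1) :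
    Summable fun k => ((p k).toReal : ℂ) * z ^ k :=
  (summable_norm_gf p hz).of_norm

lemma norm_gf_le_one (p : PMF ℕ) {z : ℂ} (hz : ‖z‖ ≤ 1) : ‖gf p z‖ ≤ 1 := by
  refine (norm_tsum_le_tsum_norm (summable_norm_gf p hz)).trans ?_
  calc (∑' k, ‖((p k).toReal : ℂ) * z ^ k‖) ≤ ∑' k, (p k).toReal := by
        refine Summable.tsum_le_tsum (fun k => ?_) (summable_norm_gf p hz) (summable_toReal p)
        rw [norm_coef]
        calc (p k).toReal * ‖z‖ ^ k ≤ (p k).toReal * 1 := by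
              have := pow_le_one₀ (norm_nonneg z) hz (n := k)
              exact mul_le_mul_of_nonneg_left this ENNReal.toReal_nonneg
          _ = (p k).toReal := mul_one _
    _ = 1 := tsum_toReal p

lemma gf_conv (n : ℕ) (p : PMF ℕ) {z : ℂ} (hz : ‖z‖ ≤ 1) :
    gf (conv n p) z = (gf p z) ^ n := by
  induction n with
  | zero =>
      rw [pow_zero, gf]
      rw [tsum_eq_single 0 (by
        intro k hk
        show (((PMF.pure 0 : PMF ℕ) k).toReal : ℂ) * z ^ k = 0
        simp [PMF.pure_apply, hk])]
      show (((PMF.pure 0 : PMF ℕ) 0).toReal : ℂ) * z ^ 0 = 1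
      simp [PMF.pure_apply]
  | succ n ih =>
      rw [pow_succ, ← ih, gf, gf, gf,
        tsum_mul_tsum_eq_tsum_sum_antidiagonal_of_summable_norm
          (summable_norm_gf (conv n p) hz) (summable_norm_gf p hz)]
      refine tsum_congr fun k => ?_
      rw [conv_succ_apply,
        Finset.Nat.sum_antidiagonal_eq_sum_range_succ
          (f := fun i j => (((conv n p) i).toReal : ℂ) * z ^ i * (((p j).toReal : ℂ) * z ^ j)),
        ENNReal.toReal_sum (fun i _ => ENNReal.mul_ne_top (pmf_ne_top _ i) (pmf_ne_top p _))]
      push_cast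
      rw [Finset.sum_mul]
      refine Finset.sum_congr rfl fun i hi => ?_
      have hik : i ≤ k := Nat.lt_succ_iff.mp (Finset.mem_range.mp hi)
      rw [ENNReal.toReal_mul]
      push_cast
      have : z ^ i * z ^ (k - i) = z ^ k := by
        rw [← pow_add, Nat.add_sub_cancel' hik]
      calc (((conv n p) i).toReal : ℂ) * ((p (k - i)).toReal : ℂ) * z ^ k
          = ((conv n p) i).toReal * z ^ i * (((p (k - i)).toReal : ℂ) * z ^ (k - i)) := by
            rw [← this]; ring

lemma Xd_succ_apply (d r k : ℕ) :
    Xd d r (k + 1) = ((k : ℝ≥0∞) + 1)⁻¹ * Yd d r k := by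
  rw [Xd_eq, PMF.bind_apply]
  rw [tsum_eq_single k (by
    intro j hj
    rw [Bstep_apply, if_neg (by omega), if_neg (Nat.succ_ne_zero k), mul_zero])]
  rw [Bstep_apply, if_pos rfl, mul_comm]

lemma toReal_add_one (k : ℕ) : ((k : ℝ≥0∞) + 1).toReal = (k : ℝ) + 1 := by
  rw [show ((k : ℝ≥0∞) + 1) = ((k + 1 : ℕ) : ℝ≥0∞) by push_cast; ring, ENNReal.toReal_natCast]
  push_cast; ring

lemma xcoef_succ (d r k : ℕ) :
    (Xd d r (k + 1)).toReal = (Yd d r k).toReal / ((k : ℝ) + 1) := by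
  rw [Xd_succ_apply, ENNReal.toReal_mul, ENNReal.toReal_inv, toReal_add_one]
  rw [div_eq_inv_mul]

lemma gf_one (p : PMF ℕ) : gf p 1 = 1 := by
  rw [gf]
  have : ∀ k : ℕ, ((p k).toReal : ℂ) * (1:ℂ) ^ k = (((p k).toReal : ℝ) : ℂ) := by
    intro k; rw [one_pow, mul_one]
  rw [tsum_congr this, ← Complex.ofReal_tsum, tsum_toReal, Complex.ofReal_one]

lemma summable_shift_norm (p : PMF ℕ) (g : ℕ → ℂ) (C : ℝ) (hg : ∀ k, ‖g k‖ ≤ C)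
    (hC : 0 ≤ C) : Summable fun k => ((p (k + 1)).toReal : ℂ) * g k := by
  apply Summable.of_norm
  refine Summable.of_nonneg_of_le (fun k => norm_nonneg _) (fun k => ?_)
    (((summable_toReal p).comp_injective (add_left_injective 1)).mul_right C)
  rw [norm_mul, Complex.norm_real, Real.norm_eq_abs, abs_of_nonneg ENNReal.toReal_nonneg]
  exact mul_le_mul_of_nonneg_left (hg k) ENNReal.toReal_nonneg

lemma gf_sub_one (p : PMF ℕ) {z : ℂ} (hz : ‖z‖ ≤ 1) :
    gf p z - 1 = ∑' (k : ℕ), ((p (k + 1)).toReal : ℂ) * (z ^ (k + 1) - 1) := by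
  have h1 : gf p z - 1 = gf p z - gf p 1 := by rw [gf_one]
  rw [h1, gf, gf]
  have hsz := summable_gf p hz
  have hs1 := summable_gf p (z := 1) (by norm_num)
  rw [← Summable.tsum_sub hsz hs1]
  have hterm : ∀ k : ℕ, ((p k).toReal : ℂ) * z ^ k - ((p k).toReal : ℂ) * (1:ℂ) ^ k
      = ((p k).toReal : ℂ) * (z ^ k - 1) := by intro k; rw [one_pow]; ring
  rw [tsum_congr hterm]
  rw [Summable.tsum_eq_zero_add (by
    apply Summable.of_norm
    refine Summable.of_nonneg_of_le (fun k => norm_nonneg _) (fun k => ?_)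
      ((summable_toReal p).mul_right 2)
    rw [norm_mul, Complex.norm_real, Real.norm_eq_abs, abs_of_nonneg ENNReal.toReal_nonneg]
    refine mul_le_mul_of_nonneg_left ?_ ENNReal.toReal_nonneg
    calc ‖z ^ k - 1‖ ≤ ‖z ^ k‖ + 1 := by
          simpa using norm_sub_le (z ^ k) 1
      _ ≤ 1 + 1 := by
          have : ‖z ^ k‖ ≤ 1 := by rw [norm_pow]; exact pow_le_one₀ (norm_nonneg z) hz
          linarith
      _ = 2 := by norm_num)]
  simp

lemma gf_X_diff (r d e : ℕ) {z : ℂ} (hz : ‖z‖ ≤ 1) :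
    gf (Xd d r) z - gf (Xd e r) z
      = ∑' (k : ℕ), (((Yd d r k).toReal - (Yd e r k).toReal : ℝ) : ℂ)
          * ((z ^ (k + 1) - 1) / ((k : ℂ) + 1)) := by
  have key : gf (Xd d r) z - gf (Xd e r) z
      = (gf (Xd d r) z - 1) - (gf (Xd e r) z - 1) := by ring
  rw [key, gf_sub_one _ hz, gf_sub_one _ hz]
  have hb : ∀ k : ℕ, ‖z ^ (k+1) - 1‖ ≤ 2 := by
    intro k
    calc ‖z ^ (k+1) - 1‖ ≤ ‖z ^ (k+1)‖ + 1 := by simpa using norm_sub_le (z ^ (k+1)) 1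
      _ ≤ 2 := by
        have : ‖z ^ (k+1)‖ ≤ 1 := by rw [norm_pow]; exact pow_le_one₀ (norm_nonneg z) hz
        linarith
  rw [← Summable.tsum_sub (summable_shift_norm _ _ 2 hb (by norm_num))
    (summable_shift_norm _ _ 2 hb (by norm_num))]
  refine tsum_congr fun k => ?_
  rw [xcoef_succ, xcoef_succ]
  push_cast
  have hk : ((k : ℂ) + 1) ≠ 0 := by
    exact_mod_cast Nat.cast_add_one_ne_zero (R := ℂ) k
  field_simp

lemma norm_seg {z : ℂ} (hz : ‖z‖ ≤ 1) {u : ℝ} (h0 : 0 ≤ u) (h1 : u ≤ 1) :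
    ‖1 + (u : ℂ) * (z - 1)‖ ≤ 1 := by
  have hrw : (1 + (u : ℂ) * (z - 1)) = ((1 - u : ℝ) : ℂ) + (u : ℂ) * z := by
    push_cast; ring
  rw [hrw]
  calc ‖((1 - u : ℝ) : ℂ) + (u : ℂ) * z‖ ≤ ‖((1 - u : ℝ) : ℂ)‖ + ‖(u : ℂ) * z‖ :=
        norm_add_le _ _
    _ = |1 - u| + |u| * ‖z‖ := by
        rw [norm_mul, Complex.norm_real, Complex.norm_real, Real.norm_eq_abs, Real.norm_eq_abs]
    _ ≤ (1 - u) + u * 1 := by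
        rw [abs_of_nonneg (by linarith), abs_of_nonneg h0]
        have : u * ‖z‖ ≤ u * 1 := mul_le_mul_of_nonneg_left hz h0
        linarith
    _ = 1 := by ring

lemma seg_integral (w : ℂ) (j : ℕ) :
    ((1 + w) ^ (j + 1) - 1) / ((j : ℂ) + 1)
      = w * ∫ u in (0:ℝ)..1, (1 + (u : ℂ) * w) ^ j := by
  have hD : ∀ x : ℝ, HasDerivAt (fun u : ℝ => (1 + (u : ℂ) * w) ^ (j + 1))
      ((((j : ℂ) + 1) * w) * (1 + (x : ℂ) * w) ^ j) x := by
    intro x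
    have hz : HasDerivAt (fun zz : ℂ => 1 + zz * w) w (x : ℂ) := by
      simpa using ((hasDerivAt_id ((x : ℝ) : ℂ)).mul_const w).const_add 1
    have h2 := hz.fun_pow (j + 1)
    have h3 : HasDerivAt (fun zz : ℂ => (1 + zz * w) ^ (j + 1))
        ((((j : ℂ) + 1) * w) * (1 + (x : ℂ) * w) ^ j) (x : ℂ) := by
      refine h2.congr_deriv ?_
      push_cast
      ring_nf
    exact h3.comp_ofReal
  have hInt : ∫ u in (0:ℝ)..1, ((((j : ℂ) + 1) * w) * (1 + (u : ℂ) * w) ^ j)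
      = (1 + w) ^ (j + 1) - 1 := by
    have := intervalIntegral.integral_eq_sub_of_hasDerivAt (a := (0:ℝ)) (b := 1)
      (fun x _ => hD x) (by apply Continuous.intervalIntegrable; continuity)
    simpa using this
  rw [intervalIntegral.integral_const_mul] at hInt
  have hk : ((j : ℂ) + 1) ≠ 0 := by exact_mod_cast Nat.cast_add_one_ne_zero (R := ℂ) j
  rw [← hInt, mul_assoc, mul_div_cancel_left₀ _ hk]


open MeasureTheory in
lemma gf_X_diff_integral (r d e : ℕ) {z : ℂ} (hz : ‖z‖ ≤ 1) :
    gf (Xd d r) z - gf (Xd e r) z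
      = (z - 1) * ∫ u in (0:ℝ)..1,
          (gf (Yd d r) (1 + (u : ℂ) * (z - 1)) - gf (Yd e r) (1 + (u : ℂ) * (z - 1))) := by
  set w : ℂ := z - 1 with hw
  have hz1 : (1 : ℂ) + w = z := by rw [hw]; ring
  set Δ : ℕ → ℝ := fun k => (Yd d r k).toReal - (Yd e r k).toReal with hΔ
  have hΔsum : Summable fun k => |Δ k| := by
    refine Summable.of_nonneg_of_le (fun k => abs_nonneg _) (fun k => ?_)
      ((summable_toReal (Yd d r)).add (summable_toReal (Yd e r)))
    calc |Δ k| ≤ |(Yd d r k).toReal| + |(Yd e r k).toReal| := abs_sub _ _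
      _ = (Yd d r k).toReal + (Yd e r k).toReal := by
          rw [abs_of_nonneg ENNReal.toReal_nonneg, abs_of_nonneg ENNReal.toReal_nonneg]
  have hterm : ∀ k : ℕ, ((Δ k : ℝ) : ℂ) * ((z ^ (k + 1) - 1) / ((k : ℂ) + 1))
      = w * ((Δ k : ℂ) * ∫ u in (0:ℝ)..1, (1 + (u : ℂ) * w) ^ k) := by
    intro k
    have hs := seg_integral w k
    rw [hz1] at hs
    rw [hs]; ring
  rw [gf_X_diff r d e hz, tsum_congr hterm, tsum_mul_left]
  congr 1
  have hmeas : ∀ k : ℕ, AEStronglyMeasurable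
      (fun u : ℝ => (Δ k : ℂ) * (1 + (u : ℂ) * w) ^ k) (volume.restrict (Set.Ioc (0:ℝ) 1)) := by
    intro k
    apply Continuous.aestronglyMeasurable
    continuity
  have hbound : ∀ k : ℕ, ∀ u ∈ Set.Ioc (0:ℝ) 1, ‖(Δ k : ℂ) * (1 + (u : ℂ) * w) ^ k‖ ≤ |Δ k| := by
    intro k u hu
    rw [norm_mul, Complex.norm_real, Real.norm_eq_abs, norm_pow]
    have h1 : ‖1 + (u : ℂ) * w‖ ≤ 1 := norm_seg hz hu.1.le hu.2
    calc |Δ k| * ‖1 + (u : ℂ) * w‖ ^ k ≤ |Δ k| * 1 :=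
          mul_le_mul_of_nonneg_left (pow_le_one₀ (norm_nonneg _) h1) (abs_nonneg _)
      _ = |Δ k| := mul_one _
  have hnnsum : Summable fun k => ‖Δ k‖₊ := by
    rw [← NNReal.summable_coe]
    simpa [coe_nnnorm, Real.norm_eq_abs] using hΔsum
  have hlint : (∑' k : ℕ, ∫⁻ u in Set.Ioc (0:ℝ) 1,
      ‖(Δ k : ℂ) * (1 + (u : ℂ) * w) ^ k‖₊ ∂volume) ≠ ⊤ := by
    have hle : ∀ k : ℕ, (∫⁻ u in Set.Ioc (0:ℝ) 1,
        ‖(Δ k : ℂ) * (1 + (u : ℂ) * w) ^ k‖₊ ∂volume) ≤ (‖Δ k‖₊ : ℝ≥0∞) := by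
      intro k
      calc (∫⁻ u in Set.Ioc (0:ℝ) 1, ‖(Δ k : ℂ) * (1 + (u : ℂ) * w) ^ k‖₊ ∂volume)
          ≤ ∫⁻ _ in Set.Ioc (0:ℝ) 1, (‖Δ k‖₊ : ℝ≥0∞) ∂volume := by
            refine lintegral_mono_ae ?_
            refine Filter.Eventually.mono (self_mem_ae_restrict measurableSet_Ioc) ?_
            intro u hu
            have h2 : ‖(Δ k : ℂ) * (1 + (u : ℂ) * w) ^ k‖ ≤ ‖Δ k‖ := by
              rw [Real.norm_eq_abs]; exact hbound k u hu
            exact_mod_cast h2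
        _ = (‖Δ k‖₊ : ℝ≥0∞) * volume (Set.Ioc (0:ℝ) 1) := by
            rw [lintegral_const, Measure.restrict_apply_univ]
        _ = (‖Δ k‖₊ : ℝ≥0∞) := by
            rw [Real.volume_Ioc]
            norm_num
    refine ne_top_of_le_ne_top ?_ (ENNReal.tsum_le_tsum hle)
    exact ENNReal.tsum_coe_ne_top_iff_summable.mpr hnnsum
  have hswap := integral_tsum hmeas hlint
  calc (∑' k : ℕ, (Δ k : ℂ) * ∫ u in (0:ℝ)..1, (1 + (u : ℂ) * w) ^ k)
      = ∑' k : ℕ, ∫ u in Set.Ioc (0:ℝ) 1, (Δ k : ℂ) * (1 + (u : ℂ) * w) ^ k ∂volume := by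
        refine tsum_congr fun k => ?_
        rw [intervalIntegral.integral_of_le zero_le_one, MeasureTheory.integral_const_mul]
    _ = ∫ u in Set.Ioc (0:ℝ) 1, (∑' k : ℕ, (Δ k : ℂ) * (1 + (u : ℂ) * w) ^ k) ∂volume :=
        hswap.symm
    _ = ∫ u in Set.Ioc (0:ℝ) 1,
          (gf (Yd d r) (1 + (u : ℂ) * w) - gf (Yd e r) (1 + (u : ℂ) * w)) ∂volume := by
        refine setIntegral_congr_fun measurableSet_Ioc fun u hu => ?_
        have h1 : ‖1 + (u : ℂ) * w‖ ≤ 1 := norm_seg hz hu.1.le hu.2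
        rw [gf, gf, ← Summable.tsum_sub (summable_gf _ h1) (summable_gf _ h1)]
        refine tsum_congr fun k => ?_
        rw [Complex.ofReal_sub, sub_mul]
    _ = ∫ u in (0:ℝ)..1,
          (gf (Yd d r) (1 + (u : ℂ) * w) - gf (Yd e r) (1 + (u : ℂ) * w)) := by
        rw [intervalIntegral.integral_of_le zero_le_one]

lemma key_bound (r : ℕ) : ∀ d : ℕ, ∀ z : ℂ, ‖z‖ ≤ 1 →
    ‖gf (Yd (d + 1) r) z - gf (Yd d r) z‖ ≤ 2 * ((r : ℝ) * ‖z - 1‖) ^ d / d.factorial := by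
  intro d
  induction d with
  | zero =>
      intro z hz
      simp only [pow_zero, Nat.factorial_zero, Nat.cast_one]
      calc ‖gf (Yd 1 r) z - gf (Yd 0 r) z‖ ≤ ‖gf (Yd 1 r) z‖ + ‖gf (Yd 0 r) z‖ :=
            norm_sub_le _ _
        _ ≤ 1 + 1 := add_le_add (norm_gf_le_one _ hz) (norm_gf_le_one _ hz)
        _ ≤ 2 * 1 / 1 := by norm_num
  | succ d ih =>
      intro z hz
      have hYs : ∀ m : ℕ, gf (Yd (m + 1) r) z = (gf (Xd m r) z) ^ r := by
        intro m; rw [Yd_succ, gf_conv r _ hz]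
      rw [hYs (d + 1), hYs d]
      set a := gf (Xd (d + 1) r) z with ha
      set b := gf (Xd d r) z with hb
      have hna : ‖a‖ ≤ 1 := norm_gf_le_one _ hz
      have hnb : ‖b‖ ≤ 1 := norm_gf_le_one _ hz
      have hfac : a ^ r - b ^ r = (∑ i ∈ Finset.range r, a ^ i * b ^ (r - 1 - i)) * (a - b) :=
        (geom_sum₂_mul a b r).symm
      have hsum : ‖∑ i ∈ Finset.range r, a ^ i * b ^ (r - 1 - i)‖ ≤ r := by
        calc ‖∑ i ∈ Finset.range r, a ^ i * b ^ (r - 1 - i)‖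
            ≤ ∑ i ∈ Finset.range r, ‖a ^ i * b ^ (r - 1 - i)‖ := norm_sum_le _ _
          _ ≤ ∑ _i ∈ Finset.range r, 1 := by
              refine Finset.sum_le_sum fun i _ => ?_
              rw [norm_mul, norm_pow, norm_pow]
              calc ‖a‖ ^ i * ‖b‖ ^ (r - 1 - i)
                  ≤ 1 * 1 := mul_le_mul (pow_le_one₀ (norm_nonneg _) hna)
                    (pow_le_one₀ (norm_nonneg _) hnb) (by positivity) zero_le_one
                _ = 1 := by norm_num
          _ = r := by simp
      -- bound ‖a - b‖ via the integral representation
      set C : ℝ := 2 * ((r : ℝ) * ‖z - 1‖) ^ d / d.factorial with hC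
      have hCpos : 0 ≤ C := by rw [hC]; positivity
      have habn : ‖a - b‖ ≤ ‖z - 1‖ * (C / (d + 1)) := by
        rw [ha, hb, gf_X_diff_integral r (d + 1) d hz, norm_mul]
        refine mul_le_mul_of_nonneg_left ?_ (norm_nonneg _)
        have hIb : ‖∫ u in (0:ℝ)..1,
            (gf (Yd (d + 1) r) (1 + (u : ℂ) * (z - 1)) - gf (Yd d r) (1 + (u : ℂ) * (z - 1)))‖
            ≤ |∫ u in (0:ℝ)..1, C * u ^ d| := by
          refine intervalIntegral.norm_integral_le_abs_of_norm_le ?_ ?_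
          · refine Filter.Eventually.mono (MeasureTheory.self_mem_ae_restrict measurableSet_uIoc) ?_
            intro u hu
            have hu' : u ∈ Set.Ioc (0:ℝ) 1 := by
              have : (0:ℝ) ⊓ 1 = 0 := by norm_num
              have h2 : (0:ℝ) ⊔ 1 = 1 := by norm_num
              exact ⟨by simpa [this] using hu.1, by simpa [h2] using hu.2⟩
            replace hu := hu'
            have h1 : ‖1 + (u : ℂ) * (z - 1)‖ ≤ 1 := norm_seg hz hu.1.le hu.2
            have h2 := ih (1 + (u : ℂ) * (z - 1)) h1
            have h3 : ‖(1 + (u : ℂ) * (z - 1)) - 1‖ = u * ‖z - 1‖ := by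
              rw [show (1 + (u : ℂ) * (z - 1)) - 1 = (u : ℂ) * (z - 1) by ring, norm_mul,
                Complex.norm_real, Real.norm_eq_abs, abs_of_nonneg hu.1.le]
            rw [h3] at h2
            calc ‖gf (Yd (d + 1) r) (1 + (u : ℂ) * (z - 1))
                  - gf (Yd d r) (1 + (u : ℂ) * (z - 1))‖
                ≤ 2 * ((r : ℝ) * (u * ‖z - 1‖)) ^ d / d.factorial := h2
              _ = C * u ^ d := by
                  rw [hC]
                  rw [show (r : ℝ) * (u * ‖z - 1‖) = ((r : ℝ) * ‖z - 1‖) * u by ring, mul_pow]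
                  ring
          · apply Continuous.intervalIntegrable; continuity
        have hIv : (∫ u in (0:ℝ)..1, C * u ^ d) = C / ((d : ℝ) + 1) := by
          rw [intervalIntegral.integral_const_mul, integral_pow]
          norm_num
          rw [div_eq_mul_inv]
        rw [hIv, abs_of_nonneg (div_nonneg hCpos (by positivity))] at hIb
        exact hIb
      rw [hfac]
      calc ‖(∑ i ∈ Finset.range r, a ^ i * b ^ (r - 1 - i)) * (a - b)‖
          = ‖∑ i ∈ Finset.range r, a ^ i * b ^ (r - 1 - i)‖ * ‖a - b‖ := norm_mul _ _
        _ ≤ (r : ℝ) * (‖z - 1‖ * (C / (d + 1))) := by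
            refine mul_le_mul hsum habn (norm_nonneg _) (Nat.cast_nonneg r)
        _ = 2 * ((r : ℝ) * ‖z - 1‖) ^ (d + 1) / (d + 1).factorial := by
            rw [hC, Nat.factorial_succ]
            have h1 : (0:ℝ) < d.factorial := by positivity
            have h2 : (0:ℝ) < (d:ℝ) + 1 := by positivity
            field_simp
            push_cast
            ring


open MeasureTheory Complex in
lemma coeff_le_of_norm_le {c : ℕ → ℝ} (hc : Summable fun j => |c j|) {ε : ℝ}
    (h : ∀ z : ℂ, ‖z‖ = 1 → ‖∑' j : ℕ, (c j : ℂ) * z ^ j‖ ≤ ε) (k : ℕ) : |c k| ≤ ε := by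
  have hπ : (0:ℝ) < 2 * Real.pi := by positivity
  set T : ℝ := 2 * Real.pi with hT
  set F : ℕ → ℝ → ℂ :=
    fun j θ => (c j : ℂ) * (Complex.exp ((θ:ℂ) * I) ^ j * Complex.exp (-(k:ℂ) * θ * I)) with hF
  have hnormF : ∀ j θ, ‖F j θ‖ = |c j| := by
    intro j θ
    rw [hF]
    simp only
    rw [norm_mul, norm_mul, norm_pow, Complex.norm_exp_ofReal_mul_I,
      show (-(k:ℂ) * (θ:ℂ) * I) = ((-(k * θ) : ℝ) : ℂ) * I by push_cast; ring,
      Complex.norm_exp_ofReal_mul_I, Complex.norm_real, Real.norm_eq_abs]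
    ring
  have hmeas : ∀ j : ℕ, AEStronglyMeasurable (F j) (volume.restrict (Set.Ioc (0:ℝ) T)) := by
    intro j
    apply Continuous.aestronglyMeasurable
    rw [hF]
    apply Continuous.mul continuous_const
    apply Continuous.mul
    · exact (Complex.continuous_exp.comp (Complex.continuous_ofReal.mul continuous_const)).pow j
    · exact Complex.continuous_exp.comp
        ((continuous_const.mul Complex.continuous_ofReal).mul continuous_const)
  have hnnsum : Summable fun j => ‖c j‖₊ := by
    rw [← NNReal.summable_coe]
    simpa [coe_nnnorm, Real.norm_eq_abs] using hc
  have hlint : (∑' j : ℕ, ∫⁻ θ in Set.Ioc (0:ℝ) T, ‖F j θ‖₊ ∂volume) ≠ ⊤ := by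
    have hconst : ∀ j : ℕ, (∫⁻ θ in Set.Ioc (0:ℝ) T, ‖F j θ‖₊ ∂volume)
        = (‖c j‖₊ : ℝ≥0∞) * ENNReal.ofReal T := by
      intro j
      have heq : ∀ θ : ℝ, (‖F j θ‖₊ : ℝ≥0∞) = (‖c j‖₊ : ℝ≥0∞) := by
        intro θ
        congr 1
        ext
        rw [coe_nnnorm, coe_nnnorm, hnormF j θ, Real.norm_eq_abs]
      calc (∫⁻ θ in Set.Ioc (0:ℝ) T, ‖F j θ‖₊ ∂volume)
          = ∫⁻ _ in Set.Ioc (0:ℝ) T, (‖c j‖₊ : ℝ≥0∞) ∂volume := lintegral_congr heq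
        _ = (‖c j‖₊ : ℝ≥0∞) * ENNReal.ofReal T := by
            rw [lintegral_const, Measure.restrict_apply_univ, Real.volume_Ioc, sub_zero]
    simp only [hconst]
    rw [ENNReal.tsum_mul_right]
    exact ENNReal.mul_ne_top (ENNReal.tsum_coe_ne_top_iff_summable.mpr hnnsum)
      ENNReal.ofReal_ne_top
  have hint : ∀ j : ℕ,
      (∫ θ in (0:ℝ)..T, Complex.exp ((θ:ℂ) * I) ^ j * Complex.exp (-(k:ℂ) * θ * I))
        = if j = k then ((T:ℝ):ℂ) else 0 := by
    intro j
    have hexp : ∀ θ : ℝ, Complex.exp ((θ:ℂ) * I) ^ j * Complex.exp (-(k:ℂ) * θ * I)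
        = Complex.exp ((((j:ℂ) - k) * I) * θ) := by
      intro θ
      rw [← Complex.exp_nat_mul, ← Complex.exp_add]
      congr 1
      push_cast
      ring
    simp only [hexp]
    rcases eq_or_ne j k with hjk | hjk
    · subst hjk
      simp only [sub_self, zero_mul, Complex.exp_zero, if_pos rfl]
      rw [intervalIntegral.integral_const]
      simp
    · have hcc : ((j:ℂ) - k) * I ≠ 0 := by
        apply mul_ne_zero
        · rw [sub_ne_zero]
          exact fun hh => hjk (Nat.cast_injective hh)
        · exact I_ne_zero
      rw [integral_exp_mul_complex hcc, if_neg hjk]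
      have h1 : Complex.exp (((j:ℂ) - k) * I * T) = 1 := by
        rw [show ((j:ℂ) - k) * I * (T:ℂ) = ((j - k : ℤ) : ℂ) * (2 * (Real.pi:ℂ) * I) by
          rw [hT]; push_cast; ring]
        exact_mod_cast Complex.exp_int_mul_two_pi_mul_I (j - k)
      rw [h1]
      simp
  -- the full integral
  set Iv : ℂ := ∫ θ in (0:ℝ)..T,
    (∑' j : ℕ, (c j : ℂ) * Complex.exp ((θ:ℂ) * I) ^ j) * Complex.exp (-(k:ℂ) * θ * I) with hIv
  have hIval : Iv = (c k : ℂ) * (T:ℂ) := by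
    have h1 : ∀ θ : ℝ,
        (∑' j : ℕ, (c j : ℂ) * Complex.exp ((θ:ℂ) * I) ^ j) * Complex.exp (-(k:ℂ) * θ * I)
          = ∑' j : ℕ, F j θ := by
      intro θ
      rw [← tsum_mul_right]
      refine tsum_congr fun j => by rw [hF]; ring
    rw [hIv]
    simp only [h1]
    rw [intervalIntegral.integral_of_le hπ.le, integral_tsum hmeas hlint]
    have h2 : ∀ j : ℕ, (∫ θ in Set.Ioc (0:ℝ) T, F j θ ∂volume)
        = (c j : ℂ) * (if j = k then ((T:ℝ):ℂ) else 0) := by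
      intro j
      rw [← intervalIntegral.integral_of_le hπ.le, hF]
      simp only
      rw [intervalIntegral.integral_const_mul, hint j]
    simp only [h2]
    rw [tsum_eq_single k (by intro j hj; rw [if_neg hj, mul_zero])]
    rw [if_pos rfl]
  have hε : 0 ≤ ε := le_trans (norm_nonneg _) (h 1 (by norm_num))
  have hIbound : ‖Iv‖ ≤ ε * |T - 0| := by
    rw [hIv]
    refine intervalIntegral.norm_integral_le_of_norm_le_const ?_
    intro θ _
    rw [norm_mul,
      show (-(k:ℂ) * (θ:ℂ) * I) = ((-(k * θ) : ℝ) : ℂ) * I by push_cast; ring,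
      Complex.norm_exp_ofReal_mul_I, mul_one]
    exact h _ (Complex.norm_exp_ofReal_mul_I θ)
  rw [hIval, norm_mul, Complex.norm_real, Real.norm_eq_abs, Complex.norm_real,
    Real.norm_eq_abs] at hIbound
  rw [sub_zero, _root_.abs_of_nonneg hπ.le] at hIbound
  exact le_of_mul_le_mul_right hIbound hπ

lemma summable_abs_diff (r d e : ℕ) :
    Summable fun k => |(Yd d r k).toReal - (Yd e r k).toReal| := by
  refine Summable.of_nonneg_of_le (fun k => abs_nonneg _) (fun k => ?_)
    ((summable_toReal (Yd d r)).add (summable_toReal (Yd e r)))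
  calc |(Yd d r k).toReal - (Yd e r k).toReal|
      ≤ |(Yd d r k).toReal| + |(Yd e r k).toReal| := abs_sub _ _
    _ = (Yd d r k).toReal + (Yd e r k).toReal := by
        rw [abs_of_nonneg ENNReal.toReal_nonneg, abs_of_nonneg ENNReal.toReal_nonneg]

lemma summable_abs_diff_X (r d e : ℕ) :
    Summable fun k => |(Xd d r k).toReal - (Xd e r k).toReal| := by
  refine Summable.of_nonneg_of_le (fun k => abs_nonneg _) (fun k => ?_)
    ((summable_toReal (Xd d r)).add (summable_toReal (Xd e r)))
  calc |(Xd d r k).toReal - (Xd e r k).toReal|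
      ≤ |(Xd d r k).toReal| + |(Xd e r k).toReal| := abs_sub _ _
    _ = (Xd d r k).toReal + (Xd e r k).toReal := by
        rw [abs_of_nonneg ENNReal.toReal_nonneg, abs_of_nonneg ENNReal.toReal_nonneg]

lemma gf_diff_eq_tsum (p q : PMF ℕ) {z : ℂ} (hz : ‖z‖ ≤ 1) :
    gf p z - gf q z = ∑' j : ℕ, (((p j).toReal - (q j).toReal : ℝ) : ℂ) * z ^ j := by
  rw [gf, gf, ← Summable.tsum_sub (summable_gf p hz) (summable_gf q hz)]
  refine tsum_congr fun j => ?_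
  rw [Complex.ofReal_sub, sub_mul]

lemma ycoef_step (r d k : ℕ) :
    |(Yd (d + 1) r k).toReal - (Yd d r k).toReal| ≤ 2 * (2 * (r:ℝ)) ^ d / d.factorial := by
  refine coeff_le_of_norm_le (summable_abs_diff r (d+1) d) (fun z hz => ?_) k
  rw [← gf_diff_eq_tsum _ _ hz.le]
  refine (key_bound r d z hz.le).trans ?_
  have hz1 : ‖z - 1‖ ≤ 2 := by
    calc ‖z - 1‖ ≤ ‖z‖ + 1 := by simpa using norm_sub_le z 1
      _ ≤ 2 := by rw [hz]; norm_num
  have : ((r:ℝ) * ‖z - 1‖) ^ d ≤ (2 * (r:ℝ)) ^ d := by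
    apply pow_le_pow_left₀ (by positivity)
    calc (r:ℝ) * ‖z - 1‖ ≤ (r:ℝ) * 2 := mul_le_mul_of_nonneg_left hz1 (Nat.cast_nonneg r)
      _ = 2 * r := by ring
  have hf : (0:ℝ) < d.factorial := by positivity
  exact (div_le_div_iff_of_pos_right hf).mpr (by linarith)

lemma xcoef_step (r d k : ℕ) :
    |(Xd (d + 1) r k).toReal - (Xd d r k).toReal| ≤ 4 * (2 * (r:ℝ)) ^ d / d.factorial := by
  refine coeff_le_of_norm_le (summable_abs_diff_X r (d+1) d) (fun z hz => ?_) k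
  have hgf : gf (Xd (d+1) r) z - gf (Xd d r) z
      = ∑' j : ℕ, (((Xd (d+1) r j).toReal - (Xd d r j).toReal : ℝ) : ℂ) * z ^ j :=
    gf_diff_eq_tsum _ _ hz.le
  rw [← hgf, gf_X_diff_integral r (d+1) d hz.le, norm_mul]
  have hz1 : ‖z - 1‖ ≤ 2 := by
    calc ‖z - 1‖ ≤ ‖z‖ + 1 := by simpa using norm_sub_le z 1
      _ ≤ 2 := by rw [hz]; norm_num
  have hC : (0:ℝ) ≤ 2 * (2 * (r:ℝ)) ^ d / d.factorial := by positivity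
  have hIb : ‖∫ u in (0:ℝ)..1,
      (gf (Yd (d + 1) r) (1 + (u : ℂ) * (z - 1)) - gf (Yd d r) (1 + (u : ℂ) * (z - 1)))‖
      ≤ (2 * (2 * (r:ℝ)) ^ d / d.factorial) * |1 - 0| := by
    refine intervalIntegral.norm_integral_le_of_norm_le_const ?_
    intro u hu
    have hu' : u ∈ Set.Ioc (0:ℝ) 1 := by
      have h1 : (0:ℝ) ⊓ 1 = 0 := by norm_num
      have h2 : (0:ℝ) ⊔ 1 = 1 := by norm_num
      exact ⟨by simpa [h1] using hu.1, by simpa [h2] using hu.2⟩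
    have h1 : ‖1 + (u : ℂ) * (z - 1)‖ ≤ 1 := norm_seg hz.le hu'.1.le hu'.2
    refine (key_bound r d _ h1).trans ?_
    have h3 : ‖(1 + (u : ℂ) * (z - 1)) - 1‖ = u * ‖z - 1‖ := by
      rw [show (1 + (u : ℂ) * (z - 1)) - 1 = (u : ℂ) * (z - 1) by ring, norm_mul,
        Complex.norm_real, Real.norm_eq_abs, abs_of_nonneg hu'.1.le]
    rw [h3]
    have h4 : ((r:ℝ) * (u * ‖z - 1‖)) ^ d ≤ (2 * (r:ℝ)) ^ d := by
      apply pow_le_pow_left₀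
        (mul_nonneg (Nat.cast_nonneg r) (mul_nonneg hu'.1.le (norm_nonneg _)))
      calc (r:ℝ) * (u * ‖z - 1‖) ≤ (r:ℝ) * (1 * 2) := by
            refine mul_le_mul_of_nonneg_left ?_ (Nat.cast_nonneg r)
            exact mul_le_mul hu'.2 hz1 (norm_nonneg _) zero_le_one
        _ = 2 * r := by ring
    have hf : (0:ℝ) < d.factorial := by positivity
    exact (div_le_div_iff_of_pos_right hf).mpr (by linarith)
  calc ‖z - 1‖ * ‖∫ u in (0:ℝ)..1,
        (gf (Yd (d + 1) r) (1 + (u : ℂ) * (z - 1)) - gf (Yd d r) (1 + (u : ℂ) * (z - 1)))‖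
      ≤ 2 * ((2 * (2 * (r:ℝ)) ^ d / d.factorial) * |1 - 0|) := by
        exact mul_le_mul hz1 hIb (norm_nonneg _) (by norm_num)
    _ = 4 * (2 * (r:ℝ)) ^ d / d.factorial := by
        rw [sub_zero, abs_one, mul_one]
        ring


lemma summable_bound (a x : ℝ) : Summable fun d : ℕ => a * x ^ d / d.factorial := by
  have := (Real.summable_pow_div_factorial x).mul_left a
  simpa [mul_div_assoc] using this

lemma exists_limit_Y (r k : ℕ) :
    ∃ L : ℝ, Tendsto (fun d => (Yd d r k).toReal) atTop (nhds L) := by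
  have hcs : CauchySeq fun d => (Yd d r k).toReal := by
    refine cauchySeq_of_dist_le_of_summable (fun d => 2 * (2 * (r:ℝ)) ^ d / d.factorial)
      (fun n => ?_) (summable_bound 2 _)
    rw [Real.dist_eq, abs_sub_comm]
    exact ycoef_step r n k
  exact cauchySeq_tendsto_of_complete hcs

lemma exists_limit_X (r k : ℕ) :
    ∃ L : ℝ, Tendsto (fun d => (Xd d r k).toReal) atTop (nhds L) := by
  have hcs : CauchySeq fun d => (Xd d r k).toReal := by
    refine cauchySeq_of_dist_le_of_summable (fun d => 4 * (2 * (r:ℝ)) ^ d / d.factorial)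
      (fun n => ?_) (summable_bound 4 _)
    rw [Real.dist_eq, abs_sub_comm]
    exact xcoef_step r n k
  exact cauchySeq_tendsto_of_complete hcs

lemma limit_sum_one (p : ℕ → PMF ℕ) (m : ℕ) (hm : ∀ d, meanE (p d) ≤ m)
    (L : ℕ → ℝ) (hL : ∀ k, Tendsto (fun d => (p d k).toReal) atTop (nhds (L k))) :
    (∀ k, 0 ≤ L k) ∧ Summable L ∧ ∑' k, L k = 1 := by
  have hnn : ∀ k, 0 ≤ L k := fun k =>
    ge_of_tendsto (hL k) (Filter.Eventually.of_forall fun d => ENNReal.toReal_nonneg)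
  have hpartial : ∀ n : ℕ, ∑ i ∈ Finset.range n, L i ≤ 1 := by
    intro n
    have ht : Tendsto (fun d => ∑ i ∈ Finset.range n, (p d i).toReal) atTop
        (nhds (∑ i ∈ Finset.range n, L i)) := tendsto_finset_sum _ (fun i _ => hL i)
    refine le_of_tendsto ht (Filter.Eventually.of_forall fun d => ?_)
    calc ∑ i ∈ Finset.range n, (p d i).toReal
        ≤ ∑' i, (p d i).toReal :=
          Summable.sum_le_tsum _ (fun i _ => ENNReal.toReal_nonneg) (summable_toReal _)
      _ = 1 := tsum_toReal _
  have hS : Summable L := summable_of_sum_range_le hnn hpartial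
  refine ⟨hnn, hS, le_antisymm (Summable.tsum_le_of_sum_range_le hS hpartial) ?_⟩
  have hlow : ∀ K : ℕ, 0 < K → 1 - (m:ℝ)/K ≤ ∑' k, L k := by
    intro K hK
    have ht : Tendsto (fun d => ∑ i ∈ Finset.range K, (p d i).toReal) atTop
        (nhds (∑ i ∈ Finset.range K, L i)) := tendsto_finset_sum _ (fun i _ => hL i)
    have h1 : 1 - (m:ℝ)/K ≤ ∑ i ∈ Finset.range K, L i :=
      ge_of_tendsto ht (Filter.Eventually.of_forall fun d => partial_sum_ge (p d) m K (hm d) hK)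
    exact h1.trans (Summable.sum_le_tsum _ (fun i _ => hnn i) hS)
  have hlim : Tendsto (fun K : ℕ => 1 - (m:ℝ)/K) atTop (nhds 1) := by
    have h0 := tendsto_const_div_atTop_nhds_zero_nat (m:ℝ)
    simpa using (tendsto_const_nhds (x := (1:ℝ)) (f := atTop)).sub h0
  exact le_of_tendsto hlim (Filter.eventually_atTop.mpr ⟨1, fun K hK => hlow K hK⟩)

end LXY

open LXY in
/-- For every `r ≥ 2` the limits `lim_d P(X_{d,r}=k)` and `lim_d P(Y_{d,r}=k)` exist for all
`k`, and the limiting values define probability distributions (they sum to `1`). -/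
theorem limits_Xd_Yd (r : ℕ) (hr : 2 ≤ r) :
    ∃ pX pY : ℕ → ℝ≥0∞,
      (∀ k, Tendsto (fun d => Xd d r k) atTop (nhds (pX k))) ∧ (∑' k, pX k) = 1 ∧
      (∀ k, Tendsto (fun d => Yd d r k) atTop (nhds (pY k))) ∧ (∑' k, pY k) = 1 := by
  classical
  choose LX hLX using exists_limit_X r
  choose LY hLY using exists_limit_Y r
  obtain ⟨hXnn, hXsum, hXone⟩ := limit_sum_one (fun d => Xd d r) 1
    (fun d => by rw [meanE_X]; simp) LX hLX
  obtain ⟨hYnn, hYsum, hYone⟩ := limit_sum_one (fun d => Yd d r) r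
    (fun d => meanE_Y d r) LY hLY
  refine ⟨fun k => ENNReal.ofReal (LX k), fun k => ENNReal.ofReal (LY k), ?_, ?_, ?_, ?_⟩
  · intro k
    exact Filter.Tendsto.congr (fun d => ENNReal.ofReal_toReal (pmf_ne_top _ _))
      (ENNReal.tendsto_ofReal (hLX k))
  · rw [← ENNReal.ofReal_tsum_of_nonneg hXnn hXsum, hXone, ENNReal.ofReal_one]
  · intro k
    exact Filter.Tendsto.congr (fun d => ENNReal.ofReal_toReal (pmf_ne_top _ _))
      (ENNReal.tendsto_ofReal (hLY k))
  · rw [← ENNReal.ofReal_tsum_of_nonneg hYnn hYsum, hYone, ENNReal.ofReal_one]
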